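/- For any integers m, n ≥ 2, the maximum over all regular languages L1 of state complexity m and L2 of state complexity n of the state complexity of L1^R · L2 equals (3/4)·2^(m+n). -/

import Mathlib

open Computability

/-- The reversal of a language. -/
def revLang {α : Type} (L : Language α) : Language α := {w | w.reverse ∈ L}

/-- The state complexity of a language: the least number of states of a complete DFA
    accepting it. -/
noncomputable def stateComplexity {α : Type} (L : Language α) : ℕ :=
  sInf {k | ∃ (σ : Type) (inst : Fintype σ) (M : DFA α σ),
    @Fintype.card σ inst = k ∧ M.accepts = L}

namespace RevCat

variable {α σ1 σ2 : Type}

/-- Subset construction automaton recognizing `L₁ᴿ · L₂`. -/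
def rc (M1 : DFA α σ1) (M2 : DFA α σ2) : DFA α (Set σ1 × Set σ2) where
  step p a :=
    ⟨{q | M1.step q a ∈ p.1},
      (fun t => M2.step t a) '' p.2 ∪ {t | t = M2.start ∧ M1.start ∈ {q | M1.step q a ∈ p.1}}⟩
  start := ⟨M1.accept, {t | t = M2.start ∧ M1.start ∈ M1.accept}⟩
  accept := {p | ∃ t ∈ p.2, t ∈ M2.accept}

theorem rc_fst (M1 : DFA α σ1) (M2 : DFA α σ2) (w : List α) :
    ((rc M1 M2).eval w).1 = {q | M1.evalFrom q w.reverse ∈ M1.accept} := by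
  induction w using List.reverseRecOn with
  | nil => rfl
  | append_singleton w a ih =>
      rw [DFA.eval_append_singleton]
      show {q | M1.step q a ∈ ((rc M1 M2).eval w).1} = _
      rw [ih]
      ext q
      simp [DFA.evalFrom, List.reverse_append]

theorem rc_snd (M1 : DFA α σ1) (M2 : DFA α σ2) (w : List α) :
    ((rc M1 M2).eval w).2 =
      {t | ∃ u v, u ++ v = w ∧ M1.evalFrom M1.start u.reverse ∈ M1.accept ∧
            M2.evalFrom M2.start v = t} := by
  induction w using List.reverseRecOn with
  | nil =>
      ext t
      show t = M2.start ∧ M1.start ∈ M1.accept ↔ _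
      constructor
      · rintro ⟨rfl, h⟩; exact ⟨[], [], rfl, h, rfl⟩
      · rintro ⟨u, v, huv, hu, hv⟩
        rcases List.append_eq_nil_iff.mp huv with ⟨rfl, rfl⟩
        exact ⟨hv.symm, hu⟩
  | append_singleton w a ih =>
      rw [DFA.eval_append_singleton]
      show (fun t => M2.step t a) '' ((rc M1 M2).eval w).2 ∪
          {t | t = M2.start ∧ M1.start ∈ {q | M1.step q a ∈ ((rc M1 M2).eval w).1}} = _
      ext t
      constructor
      · rintro (⟨t', ht', rfl⟩ | ⟨rfl, hstep⟩)
        · rw [ih] at ht'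
          obtain ⟨u, v, huv, hu, hv⟩ := ht'
          refine ⟨u, v ++ [a], by rw [← List.append_assoc, huv], hu, ?_⟩
          rw [DFA.evalFrom_append_singleton, hv]
        · rw [rc_fst] at hstep
          refine ⟨w ++ [a], [], List.append_nil _, ?_, rfl⟩
          simpa [DFA.evalFrom, List.reverse_append] using hstep
      · rintro ⟨u, v, huv, hu, rfl⟩
        rcases v.eq_nil_or_concat with rfl | ⟨v', b, rfl⟩
        · rw [List.append_nil] at huv
          subst huv
          refine Or.inr ⟨rfl, ?_⟩
          show M1.step M1.start a ∈ ((rc M1 M2).eval w).1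
          rw [rc_fst]
          simpa [DFA.evalFrom, List.reverse_append] using hu
        · simp only [List.concat_eq_append] at huv ⊢
          rw [← List.append_assoc] at huv
          obtain ⟨huv1, huv2⟩ := List.append_inj' huv rfl
          obtain rfl : b = a := by simpa using huv2
          refine Or.inl ⟨M2.evalFrom M2.start v', ?_, by simp⟩
          rw [ih]
          exact ⟨u, v', huv1, hu, rfl⟩

theorem rc_accepts (M1 : DFA α σ1) (M2 : DFA α σ2) :
    (rc M1 M2).accepts = revLang M1.accepts * M2.accepts := by
  ext w
  rw [DFA.mem_accepts]
  show (∃ t ∈ ((rc M1 M2).eval w).2, t ∈ M2.accept) ↔ _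
  rw [rc_snd, Language.mem_mul]
  constructor
  · rintro ⟨t, ⟨u, v, huv, hu, rfl⟩, ht⟩
    exact ⟨u, hu, v, ht, huv⟩
  · rintro ⟨u, hu, v, hv, huv⟩
    exact ⟨M2.evalFrom M2.start v, ⟨u, v, huv, hu, rfl⟩, hv⟩



variable {α σ1 σ2 : Type}

def Inv (M1 : DFA α σ1) (M2 : DFA α σ2) (p : Set σ1 × Set σ2) : Prop :=
  M1.start ∈ p.1 → M2.start ∈ p.2

/-- The subset automaton restricted to the invariant subset. -/
def rc' (M1 : DFA α σ1) (M2 : DFA α σ2) : DFA α {p // Inv M1 M2 p} where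
  step p a := ⟨(rc M1 M2).step p.val a, fun h => Or.inr ⟨rfl, h⟩⟩
  start := ⟨(rc M1 M2).start, fun h => ⟨rfl, h⟩⟩
  accept := {p | p.val ∈ (rc M1 M2).accept}

theorem rc'_evalFrom_val (M1 : DFA α σ1) (M2 : DFA α σ2) (w : List α)
    (p : {p // Inv M1 M2 p}) :
    ((rc' M1 M2).evalFrom p w).val = (rc M1 M2).evalFrom p.val w := by
  induction w generalizing p with
  | nil => rfl
  | cons a w ih => exact ih _

theorem rc'_accepts (M1 : DFA α σ1) (M2 : DFA α σ2) :
    (rc' M1 M2).accepts = (rc M1 M2).accepts := by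
  ext w
  rw [DFA.mem_accepts, DFA.mem_accepts]
  show ((rc' M1 M2).eval w).val ∈ (rc M1 M2).accept ↔ _
  rw [DFA.eval, rc'_evalFrom_val]
  rfl

section Card

attribute [local instance] Classical.propDecidable

/-- Sets containing a fixed point, counted. -/
def setsContainingEquiv {σ : Type} (s : σ) : {S : Set σ // s ∈ S} ≃ Set {x : σ // x ≠ s} where
  toFun S := {x | x.val ∈ S.val}
  invFun A := ⟨insert s (Subtype.val '' A), Set.mem_insert _ _⟩
  left_inv S := by
    apply Subtype.ext
    ext y
    simp only [Set.mem_insert_iff, Set.mem_image, Set.mem_setOf_eq]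
    constructor
    · rintro (rfl | ⟨x, hx, rfl⟩)
      · exact S.2
      · exact hx
    · intro hy
      by_cases h : y = s
      · exact Or.inl h
      · exact Or.inr ⟨⟨y, h⟩, hy, rfl⟩
  right_inv A := by
    ext x
    simp only [Set.mem_setOf_eq, Set.mem_insert_iff, Set.mem_image]
    constructor
    · rintro (h | ⟨y, hy, hyx⟩)
      · exact absurd h x.2
      · rwa [← Subtype.ext hyx.symm] at hy
    · intro hx
      exact Or.inr ⟨x, hx, rfl⟩

def setsAvoidingEquiv {σ : Type} (t : σ) : {T : Set σ // t ∉ T} ≃ {T : Set σ // t ∈ T} where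
  toFun T := ⟨T.valᶜ, T.2⟩
  invFun T := ⟨T.valᶜ, fun h => h T.2⟩
  left_inv T := by apply Subtype.ext; simp
  right_inv T := by apply Subtype.ext; simp

theorem card_sets_containing {σ : Type} [Fintype σ] (s : σ) :
    Fintype.card {S : Set σ // s ∈ S} = 2 ^ (Fintype.card σ - 1) := by
  rw [Fintype.card_congr (setsContainingEquiv s), Fintype.card_set,
    Fintype.card_subtype_compl, Fintype.card_subtype_eq]

theorem card_sets_avoiding {σ : Type} [Fintype σ] (t : σ) :
    Fintype.card {T : Set σ // t ∉ T} = 2 ^ (Fintype.card σ - 1) := by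
  rw [Fintype.card_congr (setsAvoidingEquiv t), card_sets_containing]

theorem card_inv [Fintype σ1] [Fintype σ2] (M1 : DFA α σ1) (M2 : DFA α σ2) :
    Fintype.card {p // Inv M1 M2 p} =
      2 ^ (Fintype.card σ1 + Fintype.card σ2) -
        2 ^ (Fintype.card σ1 - 1) * 2 ^ (Fintype.card σ2 - 1) := by
  have e1 : {p // Inv M1 M2 p} ≃ {p : Set σ1 × Set σ2 // ¬(M1.start ∈ p.1 ∧ M2.start ∉ p.2)} :=
    Equiv.subtypeEquivRight (by intro p; unfold Inv; tauto)
  have e2 : {p : Set σ1 × Set σ2 // M1.start ∈ p.1 ∧ M2.start ∉ p.2} ≃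
      {S : Set σ1 // M1.start ∈ S} × {T : Set σ2 // M2.start ∉ T} :=
    Equiv.subtypeProdEquivProd (p := fun S => M1.start ∈ S) (q := fun T => M2.start ∉ T)
  rw [Fintype.card_congr e1, Fintype.card_subtype_compl, Fintype.card_congr e2,
    Fintype.card_prod, Fintype.card_prod, card_sets_containing, card_sets_avoiding,
    Fintype.card_set, Fintype.card_set, pow_add]

theorem card_arith (m n : ℕ) (hm : 1 ≤ m) (hn : 1 ≤ n) :
    2 ^ (m + n) - 2 ^ (m - 1) * 2 ^ (n - 1) = 3 * 2 ^ (m + n - 2) := by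
  obtain ⟨a, rfl⟩ : ∃ a, m = a + 1 := ⟨m - 1, by omega⟩
  obtain ⟨b, rfl⟩ : ∃ b, n = b + 1 := ⟨n - 1, by omega⟩
  have h1 : a + 1 + (b + 1) = (a + b) + 2 := by omega
  rw [h1, Nat.add_sub_cancel, Nat.add_sub_cancel, Nat.add_sub_cancel, pow_add 2 a b]
  have e : 2 ^ (a + b + 2) = 4 * (2 ^ a * 2 ^ b) := by
    rw [pow_add, pow_add]; ring
  have hpos : 0 < 2 ^ a * 2 ^ b := Nat.mul_pos (Nat.pow_pos (by norm_num)) (Nat.pow_pos (by norm_num))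
  omega

end Card


section SC

variable {α : Type}

theorem sc_le {L : Language α} {σ : Type} [inst : Fintype σ] (M : DFA α σ)
    (h : M.accepts = L) : stateComplexity L ≤ Fintype.card σ :=
  Nat.sInf_le ⟨σ, inst, M, rfl, h⟩

theorem sc_witness {L : Language α} {σ0 : Type} [inst0 : Fintype σ0] (M0 : DFA α σ0)
    (h0 : M0.accepts = L) :
    ∃ (σ : Type) (inst : Fintype σ) (M : DFA α σ),
      @Fintype.card σ inst = stateComplexity L ∧ M.accepts = L := by
  have : {k | ∃ (σ : Type) (inst : Fintype σ) (M : DFA α σ),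
      @Fintype.card σ inst = k ∧ M.accepts = L}.Nonempty :=
    ⟨Fintype.card σ0, σ0, inst0, M0, rfl, h0⟩
  have h := Nat.sInf_mem this
  obtain ⟨σ, inst, M, hc, hacc⟩ := h
  exact ⟨σ, inst, M, hc, hacc⟩

theorem distinguishing_card_le {L : Language α} {k : ℕ} (ws : Fin k → List α)
    (h : ∀ i j, i ≠ j → ∃ u, ((ws i ++ u ∈ L) ↔ ¬(ws j ++ u ∈ L)))
    {σ : Type} [Fintype σ] (M : DFA α σ) (hM : M.accepts = L) :
    k ≤ Fintype.card σ := by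
  have hinj : Function.Injective fun i => M.eval (ws i) := by
    intro i j hij
    by_contra hne
    obtain ⟨u, hu⟩ := h i j hne
    have hmem : ∀ w : List α, (w ∈ L) ↔ M.eval w ∈ M.accept := by
      intro w; rw [← hM]; exact DFA.mem_accepts M
    have h1 : M.eval (ws i ++ u) = M.eval (ws j ++ u) := by
      show M.evalFrom M.start _ = M.evalFrom M.start _
      rw [DFA.evalFrom_of_append, DFA.evalFrom_of_append]
      exact congrArg (fun s => M.evalFrom s u) hij
    rw [hmem, hmem, h1] at hu
    tauto
  simpa using Fintype.card_le_of_injective _ hinj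

theorem le_sc {L : Language α} {σ0 : Type} [Fintype σ0] (M0 : DFA α σ0)
    (h0 : M0.accepts = L) {k : ℕ} (ws : Fin k → List α)
    (h : ∀ i j, i ≠ j → ∃ u, ((ws i ++ u ∈ L) ↔ ¬(ws j ++ u ∈ L))) :
    k ≤ stateComplexity L := by
  obtain ⟨σ, inst, M, hc, hacc⟩ := sc_witness M0 h0
  rw [← hc]
  exact distinguishing_card_le ws h M hacc

end SC

section Witness

attribute [local instance] Classical.propDecidable

lemma fin01 (r : ℕ) : (0 : Fin (r+2)) ≠ 1 := by simp [Fin.ext_iff]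

variable (p q : ℕ)

/-- witness alphabet: pairs of transformations -/
abbrev Sig : Type := (Fin (p+2) → Fin (p+2)) × (Fin (q+2) → Fin (q+2))

def W1 : DFA (Sig p q) (Fin (p+2)) := ⟨fun s a => a.1 s, 0, {1}⟩

def W2 : DFA (Sig p q) (Fin (q+2)) := ⟨fun s a => a.2 s, 0, {1}⟩

theorem sc_W1 : stateComplexity (W1 p q).accepts = p + 2 := by
  apply le_antisymm
  · simpa using sc_le (W1 p q) rfl
  · apply le_sc (W1 p q) rfl (fun i : Fin (p+2) => [(Function.const _ i, id)])
    intro i j hij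
    refine ⟨[(fun x => if x = i then 1 else 0, id)], ?_⟩
    have hji : j ≠ i := Ne.symm hij
    simp [DFA.mem_accepts, W1, DFA.eval, DFA.evalFrom, Function.const, hji, fin01 p]

theorem sc_W2 : stateComplexity (W2 p q).accepts = q + 2 := by
  apply le_antisymm
  · simpa using sc_le (W2 p q) rfl
  · apply le_sc (W2 p q) rfl (fun i : Fin (q+2) => [(id, Function.const _ i)])
    intro i j hij
    refine ⟨[(id, fun x => if x = i then 1 else 0)], ?_⟩
    have hji : j ≠ i := Ne.symm hij
    simp [DFA.mem_accepts, W2, DFA.eval, DFA.evalFrom, Function.const, hji, fin01 q]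

theorem rcW_step (S : Set (Fin (p+2))) (T : Set (Fin (q+2)))
    (f : Fin (p+2) → Fin (p+2)) (g : Fin (q+2) → Fin (q+2)) :
    (rc (W1 p q) (W2 p q)).step (S, T) (f, g) =
      ({x | f x ∈ S}, g '' T ∪ {t | t = 0 ∧ f 0 ∈ S}) := rfl

theorem rcW_start :
    (rc (W1 p q) (W2 p q)).start = ((({1} : Set (Fin (p+2)))), (∅ : Set (Fin (q+2)))) := by
  refine Prod.ext rfl ?_
  show {t | t = (0 : Fin (q+2)) ∧ (0 : Fin (p+2)) ∈ ({1} : Set (Fin (p+2)))} = ∅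
  ext t
  simp [fin01 p]

theorem acc_iff (P : Set (Fin (p+2)) × Set (Fin (q+2))) :
    P ∈ (rc (W1 p q) (W2 p q)).accept ↔ (1 : Fin (q+2)) ∈ P.2 := by
  show (∃ t ∈ P.2, t ∈ ({1} : Set (Fin (q+2)))) ↔ _
  simp

theorem reachA (k : ℕ) : ∀ T : Finset (Fin (q+2)), 0 ∈ T → T.card = k →
    ∃ w, (rc (W1 p q) (W2 p q)).eval w = (({0} : Set (Fin (p+2))), (T : Set (Fin (q+2)))) := by
  induction k with
  | zero =>
      intro T h hc
      exact absurd (Finset.card_pos.mpr ⟨0, h⟩) (by omega)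
  | succ k ih =>
      intro T h0 hc
      by_cases hk : k = 0
      · subst hk
        obtain ⟨t, ht⟩ := Finset.card_eq_one.mp hc
        subst ht
        obtain rfl : 0 = t := by simpa using h0
        refine ⟨[(fun x => if x = 0 then 1 else 0, id)], ?_⟩
        rw [DFA.eval_singleton, rcW_start, rcW_step]
        refine Prod.ext ?_ ?_
        · ext x
          by_cases hx : x = 0 <;> simp [hx, fin01 p, (fin01 p).symm]
        · show (id '' ∅) ∪ _ = _
          ext t
          simp [fin01 p]
      · have h2 : 2 ≤ T.card := by omega
        have hex : ∃ t ∈ T, t ≠ 0 := by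
          by_contra hall
          push_neg at hall
          have hsub : T ⊆ {0} := fun x hx => by simp [hall x hx]
          have := Finset.card_le_card hsub
          simp at this
          omega
        obtain ⟨t, htT, ht0⟩ := hex
        obtain ⟨w, hw⟩ := ih (T.erase t)
          (Finset.mem_erase.mpr ⟨Ne.symm ht0, h0⟩)
          (by rw [Finset.card_erase_of_mem htT]; omega)
        refine ⟨w ++ [(fun x => if x = 0 then 0 else 1, (fun x => Equiv.swap 0 t x : Fin (q+2) → Fin (q+2)))], ?_⟩
        rw [DFA.eval_append_singleton, hw, rcW_step]
        refine Prod.ext ?_ ?_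
        · ext x
          by_cases hx : x = 0 <;> simp [hx, fin01 p, (fin01 p).symm]
        · show (fun x => Equiv.swap 0 t x) '' (↑(T.erase t)) ∪ _ = (T : Set (Fin (q+2)))
          ext y
          simp only [Set.mem_union, Set.mem_setOf_eq, Set.mem_image, Finset.mem_coe,
            Finset.mem_erase, if_pos rfl, Set.mem_singleton_iff, true_and]
          constructor
          · rintro (⟨x, ⟨hxt, hxT⟩, rfl⟩ | ⟨rfl, -⟩)
            · by_cases hx0 : x = 0
              · subst hx0; rwa [Equiv.swap_apply_left]
              · rwa [Equiv.swap_apply_of_ne_of_ne hx0 hxt]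
            · exact h0
          · intro hyT
            by_cases hy0 : y = 0
            · exact Or.inr ⟨hy0, rfl⟩
            · by_cases hyt : y = t
              · subst hyt
                exact Or.inl ⟨0, ⟨Ne.symm ht0, h0⟩, by rw [Equiv.swap_apply_left]⟩
              · exact Or.inl ⟨y, ⟨hyt, hyT⟩, by rw [Equiv.swap_apply_of_ne_of_ne hy0 hyt]⟩

end Witness

section Witness2

attribute [local instance] Classical.propDecidable

variable (p q : ℕ)

theorem reachAll (S : Set (Fin (p+2))) (T : Set (Fin (q+2)))
    (hinv : (0 : Fin (p+2)) ∈ S → (0 : Fin (q+2)) ∈ T) :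
    ∃ w, (rc (W1 p q) (W2 p q)).eval w = (S, T) := by
  by_cases hT : T = ∅
  · subst hT
    have h0S : (0 : Fin (p+2)) ∉ S := fun h => (hinv h).elim
    refine ⟨[(fun x => if x ∈ S then 1 else 0, id)], ?_⟩
    rw [DFA.eval_singleton, rcW_start, rcW_step]
    refine Prod.ext ?_ ?_
    · ext x
      by_cases hx : x ∈ S <;> simp [hx, fin01 p, (fin01 p).symm]
    · show (id '' ∅) ∪ _ = _
      ext t
      simp [h0S]
  · by_cases h0T : (0 : Fin (q+2)) ∈ T
    · obtain ⟨w, hw⟩ := reachA p q T.toFinset.card T.toFinset (Set.mem_toFinset.mpr h0T) rfl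
      rw [Set.coe_toFinset] at hw
      refine ⟨w ++ [(fun x => if x ∈ S then 0 else 1, id)], ?_⟩
      rw [DFA.eval_append_singleton, hw, rcW_step]
      refine Prod.ext ?_ ?_
      · ext x
        by_cases hx : x ∈ S <;> simp [hx, fin01 p, (fin01 p).symm]
      · show (id '' T) ∪ _ = _
        ext t
        by_cases h0S : (0 : Fin (p+2)) ∈ S <;>
          by_cases ht : t = (0 : Fin (q+2)) <;>
            simp [h0S, ht, h0T, fin01 p, (fin01 p).symm]
    · have h0S : (0 : Fin (p+2)) ∉ S := fun h => h0T (hinv h)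
      obtain ⟨t0, ht0T⟩ := Set.nonempty_iff_ne_empty.mpr hT
      have h0ins : (0 : Fin (q+2)) ∈ insert (0 : Fin (q+2)) T := Set.mem_insert _ _
      obtain ⟨w, hw⟩ := reachA p q (insert (0:Fin (q+2)) T).toFinset.card
        (insert (0:Fin (q+2)) T).toFinset (Set.mem_toFinset.mpr h0ins) rfl
      rw [Set.coe_toFinset] at hw
      refine ⟨w ++ [(fun x => if x ∈ S then 0 else 1, fun x => if x = 0 then t0 else x)], ?_⟩
      rw [DFA.eval_append_singleton, hw, rcW_step]
      refine Prod.ext ?_ ?_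
      · ext x
        by_cases hx : x ∈ S <;> simp [hx, fin01 p, (fin01 p).symm]
      · show (fun x => if x = 0 then t0 else x) '' (insert 0 T) ∪ _ = _
        ext y
        simp only [Set.mem_union, Set.mem_image, Set.mem_insert_iff, Set.mem_setOf_eq]
        have hcond : ((if (0:Fin (p+2)) ∈ S then (0:Fin (p+2)) else 1) ∈ ({0} : Set (Fin (p+2)))) ↔ False := by
          simp [h0S, (fin01 p).symm]
        constructor
        · rintro (⟨x, hx | hxT, rfl⟩ | ⟨rfl, hbad⟩)
          · subst hx; simpa using ht0T
          · have hx0 : x ≠ 0 := fun h => h0T (h ▸ hxT)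
            simpa [hx0] using hxT
          · exact absurd hbad (by simpa using hcond.mp ∘ id)
        · intro hyT
          have hy0 : y ≠ 0 := fun h => h0T (h ▸ hyT)
          exact Or.inl ⟨y, Or.inr hyT, by simp [hy0]⟩

theorem distinguish (P1 P2 : Set (Fin (p+2)) × Set (Fin (q+2))) (hne : P1 ≠ P2) :
    ∃ u, ((rc (W1 p q) (W2 p q)).evalFrom P1 u ∈ (rc (W1 p q) (W2 p q)).accept ↔
      ¬((rc (W1 p q) (W2 p q)).evalFrom P2 u ∈ (rc (W1 p q) (W2 p q)).accept)) := by
  obtain ⟨S, T⟩ := P1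
  obtain ⟨S', T'⟩ := P2
  by_cases hTT : T = T'
  · subst hTT
    have hSS : S ≠ S' := fun h => hne (by rw [h])
    obtain ⟨q0, hq0⟩ := not_forall.mp (fun h => hSS (Set.ext h))
    refine ⟨[(Function.const _ q0, fun _ => (1 : Fin (q+2))),
      ((id : Fin (p+2) → Fin (p+2)), fun x => if x = 0 then 1 else 0)], ?_⟩
    have key : ∀ A : Set (Fin (p+2)),
        (rc (W1 p q) (W2 p q)).evalFrom (A, T) [(Function.const _ q0, fun _ => (1 : Fin (q+2))),
          ((id : Fin (p+2) → Fin (p+2)), fun x => if x = 0 then 1 else 0)] ∈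
          (rc (W1 p q) (W2 p q)).accept ↔ q0 ∈ A := by
      intro A
      have e1 : (rc (W1 p q) (W2 p q)).evalFrom (A, T)
          [(Function.const _ q0, fun _ => (1 : Fin (q+2))),
            ((id : Fin (p+2) → Fin (p+2)), fun x => if x = 0 then 1 else 0)] =
          (rc (W1 p q) (W2 p q)).step
            ((rc (W1 p q) (W2 p q)).step (A, T) (Function.const _ q0, fun _ => (1 : Fin (q+2))))
            ((id : Fin (p+2) → Fin (p+2)), fun x => if x = 0 then 1 else 0) := rfl
      rw [e1, rcW_step p q A T (Function.const _ q0) (fun _ => (1 : Fin (q+2))), rcW_step, acc_iff]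
      simp only [Set.mem_union, Set.mem_image, Set.mem_setOf_eq, Function.const]
      constructor
      · rintro (⟨x, hx, hx1⟩ | ⟨h10, -⟩)
        · rcases hx with (⟨y, hy, rfl⟩ | ⟨rfl, hq0A⟩)
          · by_cases h1 : (1 : Fin (q+2)) = 0
            · exact absurd h1.symm (fin01 q)
            · rw [if_neg h1] at hx1; exact absurd hx1 (fin01 q)
          · exact hq0A
        · exact absurd h10.symm (fin01 q)
      · intro hq0A
        exact Or.inl ⟨0, Or.inr ⟨rfl, hq0A⟩, by simp⟩
    rw [key S, key S']
    tauto
  · obtain ⟨t, ht⟩ := not_forall.mp (fun h => hTT (Set.ext h))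
    refine ⟨[((id : Fin (p+2) → Fin (p+2)), fun x => if x = t then 1 else 0)], ?_⟩
    have key : ∀ (A : Set (Fin (p+2))) (B : Set (Fin (q+2))),
        (rc (W1 p q) (W2 p q)).evalFrom (A, B)
          [((id : Fin (p+2) → Fin (p+2)), fun x => if x = t then 1 else 0)] ∈
          (rc (W1 p q) (W2 p q)).accept ↔ t ∈ B := by
      intro A B
      show (rc (W1 p q) (W2 p q)).step (A, B) _ ∈ _ ↔ _
      rw [rcW_step, acc_iff]
      simp only [Set.mem_union, Set.mem_image, Set.mem_setOf_eq]
      constructor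
      · rintro (⟨x, hx, hx1⟩ | ⟨h10, -⟩)
        · by_cases hxt : x = t
          · exact hxt ▸ hx
          · rw [if_neg hxt] at hx1; exact absurd hx1 (fin01 q)
        · exact absurd h10.symm (fin01 q)
      · intro htB
        exact Or.inl ⟨t, htB, by simp⟩
    rw [key S T, key S' T']
    tauto

end Witness2

section Final

attribute [local instance] Classical.propDecidable

theorem sc_rc (p q : ℕ) :
    stateComplexity (revLang (W1 p q).accepts * (W2 p q).accepts) =
      3 * 2 ^ ((p+2) + (q+2) - 2) := by
  have hacc' : (rc' (W1 p q) (W2 p q)).accepts = revLang (W1 p q).accepts * (W2 p q).accepts := by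
    rw [rc'_accepts, rc_accepts]
  have hcard : Fintype.card {P // Inv (W1 p q) (W2 p q) P} = 3 * 2 ^ ((p+2) + (q+2) - 2) := by
    rw [card_inv, Fintype.card_fin, Fintype.card_fin, card_arith _ _ (by omega) (by omega)]
  apply le_antisymm
  · rw [← hcard]
    exact sc_le _ hacc'
  · have e : Fin (3 * 2 ^ ((p+2) + (q+2) - 2)) ≃ {P // Inv (W1 p q) (W2 p q) P} :=
      (Fintype.equivFinOfCardEq hcard).symm
    have hreach : ∀ i : Fin (3 * 2 ^ ((p+2) + (q+2) - 2)),
        ∃ w, (rc (W1 p q) (W2 p q)).eval w = (e i).val :=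
      fun i => reachAll p q (e i).val.1 (e i).val.2 (e i).property
    choose ws hws using hreach
    apply le_sc (rc' (W1 p q) (W2 p q)) hacc' ws
    intro i j hij
    have hne : (e i).val ≠ (e j).val := fun h => hij (e.injective (Subtype.ext h))
    obtain ⟨u, hu⟩ := distinguish p q _ _ hne
    refine ⟨u, ?_⟩
    have hmem : ∀ i' : Fin (3 * 2 ^ ((p+2) + (q+2) - 2)),
        (ws i' ++ u ∈ revLang (W1 p q).accepts * (W2 p q).accepts) ↔
        (rc (W1 p q) (W2 p q)).evalFrom (e i').val u ∈ (rc (W1 p q) (W2 p q)).accept := by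
      intro i'
      rw [← rc_accepts, DFA.mem_accepts]
      show (rc (W1 p q) (W2 p q)).evalFrom (rc (W1 p q) (W2 p q)).start (ws i' ++ u) ∈ _ ↔ _
      rw [DFA.evalFrom_of_append,
        show (rc (W1 p q) (W2 p q)).evalFrom (rc (W1 p q) (W2 p q)).start (ws i') = (e i').val
          from hws i']
    rw [hmem i, hmem j, hu]

end Final

end RevCat

theorem revcat_state_complexity (m n : ℕ) (hm : 2 ≤ m) (hn : 2 ≤ n) :
    IsGreatest {k | ∃ (α : Type) (_ : Fintype α) (L₁ L₂ : Language α),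
        stateComplexity L₁ = m ∧ stateComplexity L₂ = n ∧
        stateComplexity (revLang L₁ * L₂) = k}
      (3 * 2 ^ (m + n - 2)) := by
  classical
  obtain ⟨m', rfl⟩ : ∃ m', m = m' + 2 := ⟨m - 2, by omega⟩
  obtain ⟨n', rfl⟩ : ∃ n', n = n' + 2 := ⟨n - 2, by omega⟩
  constructor
  · exact ⟨RevCat.Sig m' n', inferInstance, (RevCat.W1 m' n').accepts,
      (RevCat.W2 m' n').accepts, RevCat.sc_W1 m' n', RevCat.sc_W2 m' n',
      RevCat.sc_rc m' n'⟩
  · rintro k ⟨α, instα, L1, L2, h1, h2, rfl⟩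
    have hne1 : {k | ∃ (σ : Type) (inst : Fintype σ) (M : DFA α σ),
        @Fintype.card σ inst = k ∧ M.accepts = L1}.Nonempty := by
      by_contra h
      rw [Set.not_nonempty_iff_eq_empty] at h
      have h0 : stateComplexity L1 = 0 := by unfold stateComplexity; rw [h, Nat.sInf_empty]
      omega
    have hne2 : {k | ∃ (σ : Type) (inst : Fintype σ) (M : DFA α σ),
        @Fintype.card σ inst = k ∧ M.accepts = L2}.Nonempty := by
      by_contra h
      rw [Set.not_nonempty_iff_eq_empty] at h
      have h0 : stateComplexity L2 = 0 := by unfold stateComplexity; rw [h, Nat.sInf_empty]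
      omega
    obtain ⟨σ1, inst1, M1, hc1, ha1⟩ := Nat.sInf_mem hne1
    obtain ⟨σ2, inst2, M2, hc2, ha2⟩ := Nat.sInf_mem hne2
    haveI := inst1
    haveI := inst2
    have hc1' : Fintype.card σ1 = m' + 2 := by
      have h := hc1.trans h1
      convert h using 2
    have hc2' : Fintype.card σ2 = n' + 2 := by
      have h := hc2.trans h2
      convert h using 2
    have key := RevCat.sc_le (RevCat.rc' M1 M2)
      (by rw [RevCat.rc'_accepts, RevCat.rc_accepts, ha1, ha2])
    rw [RevCat.card_inv, hc1', hc2', RevCat.card_arith _ _ (by omega) (by omega)] at key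
    exact key
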